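/- Let L = 1.12 and let M be a median of Z under P. Then for every u > 0, P( Z ≤ M − 2·max( L·u, σ·√(L·u) ) ) ≤ 2·e^{−u}. -/

import Mathlib

set_option linter.unusedSectionVars false

open Finset

section TalagrandAux

/-- Key analytic estimate: `e^x + e^(-x) - 2 ≤ (31/28) x^2` for `x ∈ [0,1]`. -/
private lemma phi_bound {x : ℝ} (h0 : 0 ≤ x) (h1 : x ≤ 1) :
    Real.exp x + Real.exp (-x) - 2 ≤ (31/28) * x ^ 2 := by
  have hx6 : (0:ℕ) < 6 := by norm_num
  have hb1 := Real.exp_bound' h0 h1 hx6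
  have hxn : |(-x)| ≤ 1 := by rw [abs_neg, abs_of_nonneg h0]; exact h1
  have hb2 := Real.exp_bound hxn hx6
  have hb2' : Real.exp (-x) - ∑ m ∈ Finset.range 6, (-x) ^ m / m.factorial
      ≤ |(-x)| ^ 6 * (Nat.succ 6 / (Nat.factorial 6 * 6)) := (abs_sub_le_iff.1 hb2).1
  have habs : |(-x)| ^ 6 = x ^ 6 := by
    rw [abs_neg, abs_of_nonneg h0]
  have hs1 : (∑ m ∈ Finset.range 6, x ^ m / (m.factorial : ℝ))
      = 1 + x + x^2/2 + x^3/6 + x^4/24 + x^5/120 := by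
    norm_num [Finset.sum_range_succ, Nat.factorial]
    try ring
  have hs2 : (∑ m ∈ Finset.range 6, (-x) ^ m / (m.factorial : ℝ))
      = 1 - x + x^2/2 - x^3/6 + x^4/24 - x^5/120 := by
    norm_num [Finset.sum_range_succ, Nat.factorial]
    try ring
  rw [hs2, habs] at hb2'
  rw [hs1] at hb1
  norm_num [Nat.factorial] at hb1 hb2'
  have h2 : x^2 ≤ 1 := by nlinarith
  have h4 : x^4 ≤ x^2 := by nlinarith
  have h6 : x^6 ≤ x^2 := by nlinarith
  nlinarith [hb1, hb2']

/-- If `1 ≤ r ≤ s` then `r + r⁻¹ ≤ s + s⁻¹`. -/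
private lemma add_inv_mono {r s : ℝ} (hr : 1 ≤ r) (hs : r ≤ s) :
    r + r⁻¹ ≤ s + s⁻¹ := by
  have hr0 : 0 < r := lt_of_lt_of_le one_pos hr
  have hs0 : 0 < s := lt_of_lt_of_le hr0 hs
  have hs1 : 1 ≤ s := le_trans hr hs
  have hrs : 1 ≤ r * s := one_le_mul_of_one_le_of_one_le hr hs1
  have hdiff : r⁻¹ - s⁻¹ = (s - r) / (r * s) := by
    field_simp
  have hle : (s - r) / (r * s) ≤ s - r :=
    div_le_self (by linarith) hrs
  linarith [hdiff ▸ hle]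

variable {Ω : Type*} [Fintype Ω] [DecidableEq Ω] [Nonempty Ω]

/-- The two-sided MGF pair lemma. -/
private lemma pair_mgf (μ : Ω → ℝ) (hμ : ∀ ω, 0 ≤ μ ω) (hμsum : ∑ ω, μ ω = 1)
    (R m : Ω → ℝ) (lam : ℝ) (hlam0 : 0 ≤ lam) (hlam1 : lam ≤ 1)
    (hm0 : ∀ ω, 0 ≤ m ω) (hm1 : ∀ ω, m ω ≤ 1)
    (hR1 : ∀ ω, 1 ≤ R ω) (hRm : ∀ ω, R ω ≤ Real.exp (lam * m ω)) :
    (∑ ω, μ ω * R ω) * (∑ ω, μ ω * (R ω)⁻¹) ≤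
      Real.exp ((31/28) * lam^2 * ∑ ω, μ ω * (m ω)^2) := by
  have hRpos : ∀ ω, 0 < R ω := fun ω => lt_of_lt_of_le one_pos (hR1 ω)
  set A := ∑ ω, μ ω * R ω with hA
  set B := ∑ ω, μ ω * (R ω)⁻¹ with hB
  have hA0 : 0 ≤ A := Finset.sum_nonneg fun ω _ => mul_nonneg (hμ ω) (hRpos ω).le
  have hB0 : 0 ≤ B := Finset.sum_nonneg fun ω _ => mul_nonneg (hμ ω) (inv_nonneg.2 (hRpos ω).le)
  have hAe : A ≤ Real.exp (A - 1) := by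
    have := Real.add_one_le_exp (A - 1); linarith
  have hBe : B ≤ Real.exp (B - 1) := by
    have := Real.add_one_le_exp (B - 1); linarith
  have step1 : A * B ≤ Real.exp (A + B - 2) := by
    calc A * B ≤ Real.exp (A - 1) * Real.exp (B - 1) :=
          mul_le_mul hAe hBe hB0 (Real.exp_pos _).le
      _ = Real.exp (A + B - 2) := by rw [← Real.exp_add]; ring_nf
  refine le_trans step1 (Real.exp_le_exp.2 ?_)
  have hAB : A + B - 2 = ∑ ω, μ ω * (R ω + (R ω)⁻¹ - 2) := by
    rw [hA, hB]
    rw [← Finset.sum_add_distrib]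
    have : ∑ ω, μ ω * (R ω + (R ω)⁻¹ - 2)
        = ∑ ω, ((μ ω * R ω + μ ω * (R ω)⁻¹) - 2 * μ ω) := by
      apply Finset.sum_congr rfl; intro ω _; ring
    rw [this, Finset.sum_sub_distrib, ← Finset.mul_sum, hμsum]
    ring
  rw [hAB]
  have pointwise : ∀ ω, μ ω * (R ω + (R ω)⁻¹ - 2) ≤ μ ω * ((31/28) * lam^2 * (m ω)^2) := by
    intro ω
    apply mul_le_mul_of_nonneg_left _ (hμ ω)
    have h1 : R ω + (R ω)⁻¹ ≤ Real.exp (lam * m ω) + (Real.exp (lam * m ω))⁻¹ :=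
      add_inv_mono (hR1 ω) (hRm ω)
    have h2 : (Real.exp (lam * m ω))⁻¹ = Real.exp (-(lam * m ω)) := by
      rw [← Real.exp_neg]
    have h3 : Real.exp (lam * m ω) + Real.exp (-(lam * m ω)) - 2
        ≤ (31/28) * (lam * m ω) ^ 2 := by
      apply phi_bound (mul_nonneg hlam0 (hm0 ω))
      calc lam * m ω ≤ 1 * 1 := by
            apply mul_le_mul hlam1 (hm1 ω) (hm0 ω) zero_le_one
        _ = 1 := by ring
    rw [h2] at h1
    have h4 : (31/28 : ℝ) * (lam * m ω)^2 = (31/28) * lam^2 * (m ω)^2 := by ring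
    rw [h4] at h3
    linarith
  calc ∑ ω, μ ω * (R ω + (R ω)⁻¹ - 2) ≤ ∑ ω, μ ω * ((31/28) * lam^2 * (m ω)^2) :=
        Finset.sum_le_sum fun ω _ => pointwise ω
    _ = (31/28) * lam^2 * ∑ ω, μ ω * (m ω)^2 := by
        rw [Finset.mul_sum]; apply Finset.sum_congr rfl; intro ω _; ring

/-- One-coordinate lemma: arithmetic-harmonic control for shifted soft-max averages. -/
private lemma step_lemma (μ : Ω → ℝ) (hμ0 : ∀ ω, 0 ≤ μ ω) (hμsum : ∑ ω, μ ω = 1)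
    (F : Finset (Ω → ℝ)) (hF : F.Nonempty)
    (hrange : ∀ f ∈ F, ∀ ω, f ω ∈ Set.Icc (0 : ℝ) 1)
    (v : ℝ) (hv : ∀ f ∈ F, ∑ ω, f ω ^ 2 * μ ω ≤ v)
    (lam : ℝ) (hlam0 : 0 ≤ lam) (hlam1 : lam ≤ 1)
    {Y : Type*} [Fintype Y] [Nonempty Y]
    (w : Y → ℝ) (hw : ∀ y, 0 < w y)
    (U : (Ω → ℝ) → Y → ℝ) :
    (∑ ω, μ ω * (∑ y, w y * Real.exp (lam * F.sup' hF fun f => U f y - f ω))) *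
    (∑ ω, μ ω * (∑ y, w y * Real.exp (lam * F.sup' hF fun f => U f y - f ω))⁻¹) ≤
      Real.exp ((31/28) * lam ^ 2 * v) := by
  classical
  set P : Ω → ℝ := fun ω => ∑ y, w y * Real.exp (lam * F.sup' hF fun f => U f y - f ω) with hP
  set Q : Y → ℝ := fun y => Real.exp (lam * F.sup' hF fun f => U f y) with hQ
  set q0 : ℝ := ∑ y, w y * Q y with hq0
  have hq0pos : 0 < q0 := by
    apply Finset.sum_pos (fun y _ => mul_pos (hw y) (Real.exp_pos _)) Finset.univ_nonempty
  -- argmax selection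
  choose g hgF hgEq using fun y => Finset.exists_mem_eq_sup' hF (fun f => U f y)
  set ρ : Y → ℝ := fun y => w y * Q y / q0 with hρ
  have hρ0 : ∀ y, 0 ≤ ρ y := fun y => div_nonneg (mul_nonneg (hw y).le (Real.exp_pos _).le) hq0pos.le
  have hρsum : ∑ y, ρ y = 1 := by
    have h1 : ∑ y, w y * Q y / q0 = 1 := by
      rw [← Finset.sum_div, ← hq0, div_self (ne_of_gt hq0pos)]
    exact h1
  set m : Ω → ℝ := fun ω => ∑ y, ρ y * g y ω with hm
  have hg01 : ∀ y ω, 0 ≤ g y ω ∧ g y ω ≤ 1 := fun y ω => (hrange (g y) (hgF y) ω)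
  have hm0 : ∀ ω, 0 ≤ m ω :=
    fun ω => Finset.sum_nonneg fun y _ => mul_nonneg (hρ0 y) (hg01 y ω).1
  have hm1 : ∀ ω, m ω ≤ 1 := by
    intro ω
    calc m ω ≤ ∑ y, ρ y * 1 :=
          Finset.sum_le_sum fun y _ => mul_le_mul_of_nonneg_left (hg01 y ω).2 (hρ0 y)
      _ = ∑ y, ρ y := by simp
      _ = 1 := hρsum
  -- P ω ≤ q0
  have hPle : ∀ ω, P ω ≤ q0 := by
    intro ω
    apply Finset.sum_le_sum
    intro y _
    apply mul_le_mul_of_nonneg_left _ (hw y).le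
    apply Real.exp_le_exp.2
    apply mul_le_mul_of_nonneg_left _ hlam0
    apply Finset.sup'_le
    intro f hf
    calc U f y - f ω ≤ U f y := by linarith [(hrange f hf ω).1]
      _ ≤ F.sup' hF fun f => U f y := Finset.le_sup' (fun f => U f y) hf
  -- q0 * exp(-lam * m ω) ≤ P ω
  have hPge : ∀ ω, q0 * Real.exp (-(lam * m ω)) ≤ P ω := by
    intro ω
    have jensen : Real.exp (∑ y, ρ y • (-(lam * g y ω))) ≤ ∑ y, ρ y • Real.exp (-(lam * g y ω)) :=
      convexOn_exp.map_sum_le (fun y _ => hρ0 y) hρsum (fun y _ => Set.mem_univ _)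
    have harg : ∑ y, ρ y • (-(lam * g y ω)) = -(lam * m ω) := by
      simp only [smul_eq_mul, hm, Finset.mul_sum]
      rw [← Finset.sum_neg_distrib]
      apply Finset.sum_congr rfl
      intro y _; ring
    rw [harg] at jensen
    have step1 : q0 * Real.exp (-(lam * m ω)) ≤ ∑ y, w y * Q y * Real.exp (-(lam * g y ω)) := by
      calc q0 * Real.exp (-(lam * m ω)) ≤ q0 * ∑ y, ρ y • Real.exp (-(lam * g y ω)) :=
            mul_le_mul_of_nonneg_left jensen hq0pos.le
        _ = ∑ y, w y * Q y * Real.exp (-(lam * g y ω)) := by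
            rw [Finset.mul_sum]
            apply Finset.sum_congr rfl
            intro y _
            simp only [smul_eq_mul, hρ]
            field_simp
    refine le_trans step1 (Finset.sum_le_sum ?_)
    intro y _
    have hQy : Q y * Real.exp (-(lam * g y ω)) = Real.exp (lam * (U (g y) y - g y ω)) := by
      rw [hQ]
      simp only
      rw [← Real.exp_add, hgEq y]
      ring_nf
    rw [mul_assoc, hQy]
    apply mul_le_mul_of_nonneg_left _ (hw y).le
    apply Real.exp_le_exp.2
    apply mul_le_mul_of_nonneg_left _ hlam0
    exact Finset.le_sup' (fun f => U f y - f ω) (hgF y)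
  have hPpos : ∀ ω, 0 < P ω :=
    fun ω => lt_of_lt_of_le (mul_pos hq0pos (Real.exp_pos _)) (hPge ω)
  -- second moment of m
  have hmsq : ∑ ω, μ ω * (m ω) ^ 2 ≤ v := by
    have msq_le : ∀ ω, (m ω) ^ 2 ≤ ∑ y, ρ y * (g y ω) ^ 2 := by
      intro ω
      have jensen2 : (∑ y, ρ y • g y ω) ^ 2 ≤ ∑ y, ρ y • (g y ω) ^ 2 := by
        have := (Even.convexOn_pow (⟨1, rfl⟩ : Even 2)).map_sum_le
          (fun (y : Y) (_ : y ∈ Finset.univ) => hρ0 y) hρsum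
          (fun (y : Y) (_ : y ∈ Finset.univ) => Set.mem_univ (g y ω))
        simpa using this
      simpa [smul_eq_mul, hm] using jensen2
    calc ∑ ω, μ ω * (m ω) ^ 2 ≤ ∑ ω, μ ω * ∑ y, ρ y * (g y ω) ^ 2 :=
          Finset.sum_le_sum fun ω _ => mul_le_mul_of_nonneg_left (msq_le ω) (hμ0 ω)
      _ = ∑ ω, ∑ y, ρ y * ((g y ω) ^ 2 * μ ω) := by
          apply Finset.sum_congr rfl
          intro ω _
          rw [Finset.mul_sum]
          apply Finset.sum_congr rfl
          intro y _; ring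
      _ = ∑ y, ∑ ω, ρ y * ((g y ω) ^ 2 * μ ω) := Finset.sum_comm
      _ = ∑ y, ρ y * ∑ ω, (g y ω) ^ 2 * μ ω := by
          apply Finset.sum_congr rfl
          intro y _
          rw [Finset.mul_sum]
      _ ≤ ∑ y, ρ y * v := by
          apply Finset.sum_le_sum
          intro y _
          exact mul_le_mul_of_nonneg_left (hv (g y) (hgF y)) (hρ0 y)
      _ = v := by rw [← Finset.sum_mul, hρsum, one_mul]
  -- apply the pair lemma with R = q0 / P
  have key := pair_mgf μ hμ0 hμsum (fun ω => q0 * (P ω)⁻¹) m lam hlam0 hlam1 hm0 hm1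
    (fun ω => by
      show (1:ℝ) ≤ q0 * (P ω)⁻¹
      rw [← div_eq_mul_inv]
      exact (one_le_div (hPpos ω)).2 (hPle ω))
    (fun ω => by
      show q0 * (P ω)⁻¹ ≤ Real.exp (lam * m ω)
      rw [← div_eq_mul_inv, div_le_iff₀ (hPpos ω)]
      calc q0 = q0 * (Real.exp (-(lam * m ω)) * Real.exp (lam * m ω)) := by
            rw [← Real.exp_add]; simp
        _ = (q0 * Real.exp (-(lam * m ω))) * Real.exp (lam * m ω) := by ring
        _ ≤ P ω * Real.exp (lam * m ω) :=
            mul_le_mul_of_nonneg_right (hPge ω) (Real.exp_pos _).le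
        _ = Real.exp (lam * m ω) * P ω := by ring)
  have convert1 : (∑ ω, μ ω * (q0 * (P ω)⁻¹)) = q0 * ∑ ω, μ ω * (P ω)⁻¹ := by
    rw [Finset.mul_sum]; apply Finset.sum_congr rfl; intro ω _; ring
  have convert2 : (∑ ω, μ ω * (q0 * (P ω)⁻¹)⁻¹) = q0⁻¹ * ∑ ω, μ ω * P ω := by
    rw [Finset.mul_sum]
    apply Finset.sum_congr rfl
    intro ω _
    rw [mul_inv, inv_inv]
    ring
  rw [convert1, convert2] at key
  have keyeq : q0 * (∑ ω, μ ω * (P ω)⁻¹) * (q0⁻¹ * ∑ ω, μ ω * P ω)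
      = (∑ ω, μ ω * P ω) * (∑ ω, μ ω * (P ω)⁻¹) := by
    field_simp
  rw [keyeq] at key
  refine le_trans key (Real.exp_le_exp.2 ?_)
  exact mul_le_mul_of_nonneg_left hmsq (by positivity)

/-- Two-sided MGF bound for suprema, by induction on the number of coordinates. -/
private lemma mgf_product (μ : Ω → ℝ) (hμpos : ∀ ω, 0 < μ ω) (hμsum : ∑ ω, μ ω = 1)
    (F : Finset (Ω → ℝ)) (hF : F.Nonempty)
    (hrange : ∀ f ∈ F, ∀ ω, f ω ∈ Set.Icc (0 : ℝ) 1)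
    (v : ℝ) (hv : ∀ f ∈ F, ∑ ω, f ω ^ 2 * μ ω ≤ v)
    (lam : ℝ) (hlam0 : 0 ≤ lam) (hlam1 : lam ≤ 1) :
    ∀ (mm : ℕ) (c : (Ω → ℝ) → ℝ),
    (∑ y : Fin mm → Ω, (∏ i, μ (y i)) *
        Real.exp (lam * F.sup' hF fun f => c f - ∑ i, f (y i))) *
    (∑ y : Fin mm → Ω, (∏ i, μ (y i)) *
        Real.exp (-(lam * F.sup' hF fun f => c f - ∑ i, f (y i)))) ≤
      Real.exp (mm * ((31/28) * lam ^ 2 * v)) := by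
  intro mm
  induction mm with
  | zero =>
    intro c
    have huniq : ∀ (h : (Fin 0 → Ω) → ℝ), (∑ y : Fin 0 → Ω, h y) = h (fun i => i.elim0) := by
      intro h
      rw [Fintype.sum_eq_single (fun (i : Fin 0) => i.elim0)]
      intro y hy
      exact absurd (funext fun i => i.elim0) hy
    rw [huniq, huniq]
    simp only [Finset.univ_eq_empty, Finset.prod_empty, Finset.sum_empty, one_mul]
    rw [← Real.exp_add]
    simp
  | succ mm ih =>
    intro c
    -- decompose sums over Fin (mm+1) → Ω
    have decomp : ∀ (h : (Fin (mm+1) → Ω) → ℝ),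
        (∑ x : Fin (mm+1) → Ω, h x) = ∑ ω : Ω, ∑ y : Fin mm → Ω, h (Fin.cons ω y : Fin (mm+1) → Ω) := by
      intro h
      rw [← Equiv.sum_comp (Fin.consEquiv (fun _ => Ω)) h, Fintype.sum_prod_type]
      rfl
    have hprod : ∀ (ω : Ω) (y : Fin mm → Ω),
        (∏ i : Fin (mm+1), μ ((Fin.cons ω y : Fin (mm+1) → Ω) i)) = μ ω * ∏ i : Fin mm, μ (y i) := by
      intro ω y
      rw [Fin.prod_univ_succ]
      simp
    have hsum : ∀ (f : Ω → ℝ) (ω : Ω) (y : Fin mm → Ω),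
        (∑ i : Fin (mm+1), f ((Fin.cons ω y : Fin (mm+1) → Ω) i)) = f ω + ∑ i : Fin mm, f (y i) := by
      intro f ω y
      rw [Fin.sum_univ_succ]
      simp
    set P : Ω → ℝ := fun ω => ∑ y : Fin mm → Ω, (∏ i, μ (y i)) *
        Real.exp (lam * F.sup' hF fun f => c f - (∑ i, f (y i)) - f ω) with hPdef
    set N : Ω → ℝ := fun ω => ∑ y : Fin mm → Ω, (∏ i, μ (y i)) *
        Real.exp (-(lam * F.sup' hF fun f => c f - (∑ i, f (y i)) - f ω)) with hNdef
    have hsupeq : ∀ (ω : Ω) (y : Fin mm → Ω),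
        (F.sup' hF fun f => c f - ∑ i : Fin (mm+1), f ((Fin.cons ω y : Fin (mm+1) → Ω) i))
          = F.sup' hF fun f => c f - (∑ i : Fin mm, f (y i)) - f ω := by
      intro ω y
      apply Finset.sup'_congr hF rfl
      intro f _
      rw [hsum f ω y]
      ring
    have hsup3 : ∀ (ω : Ω) (y : Fin mm → Ω),
        (F.sup' hF fun f => c f - f ω - ∑ i : Fin mm, f (y i))
          = F.sup' hF fun f => c f - (∑ i : Fin mm, f (y i)) - f ω := by
      intro ω y
      apply Finset.sup'_congr hF rfl
      intro f _
      ring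
    have eq1 : (∑ x : Fin (mm+1) → Ω, (∏ i, μ (x i)) *
        Real.exp (lam * F.sup' hF fun f => c f - ∑ i, f (x i))) = ∑ ω, μ ω * P ω := by
      rw [decomp]
      apply Finset.sum_congr rfl
      intro ω _
      rw [hPdef, Finset.mul_sum]
      apply Finset.sum_congr rfl
      intro y _
      rw [hprod ω y, hsupeq ω y]
      ring
    have eq2 : (∑ x : Fin (mm+1) → Ω, (∏ i, μ (x i)) *
        Real.exp (-(lam * F.sup' hF fun f => c f - ∑ i, f (x i)))) = ∑ ω, μ ω * N ω := by
      rw [decomp]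
      apply Finset.sum_congr rfl
      intro ω _
      rw [hNdef, Finset.mul_sum]
      apply Finset.sum_congr rfl
      intro y _
      rw [hprod ω y, hsupeq ω y]
      ring
    rw [eq1, eq2]
    -- positivity of P
    have hwpos : ∀ y : Fin mm → Ω, (0:ℝ) < ∏ i, μ (y i) :=
      fun y => Finset.prod_pos fun i _ => hμpos (y i)
    have hPpos : ∀ ω, 0 < P ω := by
      intro ω
      apply Finset.sum_pos (fun y _ => mul_pos (hwpos y) (Real.exp_pos _)) Finset.univ_nonempty
    have hN0 : ∀ ω, 0 ≤ N ω := by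
      intro ω
      exact Finset.sum_nonneg fun y _ => mul_nonneg (hwpos y).le (Real.exp_pos _).le
    -- IH gives: N ω ≤ exp(mm * β) * (P ω)⁻¹
    have hN : ∀ ω, N ω ≤ Real.exp (mm * ((31/28) * lam ^ 2 * v)) * (P ω)⁻¹ := by
      intro ω
      have h : (∑ y : Fin mm → Ω, (∏ i, μ (y i)) *
          Real.exp (lam * F.sup' hF fun f => c f - f ω - ∑ i, f (y i))) *
        (∑ y : Fin mm → Ω, (∏ i, μ (y i)) *
          Real.exp (-(lam * F.sup' hF fun f => c f - f ω - ∑ i, f (y i)))) ≤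
          Real.exp (mm * ((31/28) * lam ^ 2 * v)) := ih (fun f => c f - f ω)
      have hPeq : (∑ y : Fin mm → Ω, (∏ i, μ (y i)) *
          Real.exp (lam * F.sup' hF fun f => c f - f ω - ∑ i, f (y i))) = P ω := by
        rw [hPdef]
        apply Finset.sum_congr rfl
        intro y _
        rw [hsup3 ω y]
      have hNeq : (∑ y : Fin mm → Ω, (∏ i, μ (y i)) *
          Real.exp (-(lam * F.sup' hF fun f => c f - f ω - ∑ i, f (y i)))) = N ω := by
        rw [hNdef]
        apply Finset.sum_congr rfl
        intro y _
        rw [hsup3 ω y]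
      rw [hPeq, hNeq] at h
      have h3 : N ω ≤ Real.exp (mm * ((31/28) * lam ^ 2 * v)) / P ω := by
        rw [le_div_iff₀ (hPpos ω)]
        calc N ω * P ω = P ω * N ω := mul_comm _ _
          _ ≤ _ := h
      rw [div_eq_mul_inv] at h3
      exact h3
    -- the one-coordinate lemma
    have hstep' : (∑ ω, μ ω * P ω) * (∑ ω, μ ω * (P ω)⁻¹) ≤
        Real.exp ((31/28) * lam ^ 2 * v) := by
      have hstep := step_lemma μ (fun ω => (hμpos ω).le) hμsum F hF hrange v hv lam hlam0 hlam1
        (fun y : Fin mm → Ω => ∏ i, μ (y i)) hwpos (fun f y => c f - ∑ i, f (y i))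
      exact hstep
    have hNsum : (∑ ω, μ ω * N ω) ≤
        Real.exp (mm * ((31/28) * lam ^ 2 * v)) * ∑ ω, μ ω * (P ω)⁻¹ := by
      rw [Finset.mul_sum]
      apply Finset.sum_le_sum
      intro ω _
      calc μ ω * N ω ≤ μ ω * (Real.exp (mm * ((31/28) * lam ^ 2 * v)) * (P ω)⁻¹) :=
            mul_le_mul_of_nonneg_left (hN ω) (hμpos ω).le
        _ = Real.exp (mm * ((31/28) * lam ^ 2 * v)) * (μ ω * (P ω)⁻¹) := by ring
    have hPsum0 : 0 ≤ ∑ ω, μ ω * P ω :=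
      Finset.sum_nonneg fun ω _ => mul_nonneg (hμpos ω).le (hPpos ω).le
    calc (∑ ω, μ ω * P ω) * (∑ ω, μ ω * N ω)
        ≤ (∑ ω, μ ω * P ω) * (Real.exp (mm * ((31/28) * lam ^ 2 * v)) * ∑ ω, μ ω * (P ω)⁻¹) :=
          mul_le_mul_of_nonneg_left hNsum hPsum0
      _ = Real.exp (mm * ((31/28) * lam ^ 2 * v)) *
          ((∑ ω, μ ω * P ω) * (∑ ω, μ ω * (P ω)⁻¹)) := by ring
      _ ≤ Real.exp (mm * ((31/28) * lam ^ 2 * v)) * Real.exp ((31/28) * lam ^ 2 * v) :=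
          mul_le_mul_of_nonneg_left hstep' (Real.exp_pos _).le
      _ = Real.exp ((mm + 1 : ℕ) * ((31/28) * lam ^ 2 * v)) := by
          rw [← Real.exp_add]
          congr 1
          push_cast
          ring

end TalagrandAux


/-- For L = 1.12 and M a median of Z, for every u > 0,
P(Z ≤ M − 2 max(Lu, σ√(Lu))) ≤ 2 e^{−u}. -/
theorem concentration_below_median {Ω : Type*} [Fintype Ω] [DecidableEq Ω] [Nonempty Ω]
    (μ : Ω → ℝ) (hμpos : ∀ ω, 0 < μ ω) (hμsum : ∑ ω, μ ω = 1)
    (n : ℕ) (F : Finset (Ω → ℝ)) (hF : F.Nonempty)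
    (hrange : ∀ f ∈ F, ∀ ω, f ω ∈ Set.Icc (0 : ℝ) 1)
    (Z : (Fin n → Ω) → ℝ)
    (hZ : ∀ x, Z x = F.sup' hF (fun f => ∑ i : Fin n, ((∑ ω, f ω * μ ω) - f (x i))))
    (σ : ℝ) (hσ : σ = Real.sqrt (n * F.sup' hF (fun f => ∑ ω, f ω ^ 2 * μ ω)))
    (L : ℝ) (hL : L = 1.12)
    (M : ℝ)
    (hM1 : (1 : ℝ) / 2 ≤ ∑ x ∈ univ.filter (fun x : Fin n → Ω => Z x ≤ M), ∏ i, μ (x i))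
    (hM2 : (1 : ℝ) / 2 ≤ ∑ x ∈ univ.filter (fun x : Fin n → Ω => M ≤ Z x), ∏ i, μ (x i))
    (u : ℝ) (hu : 0 < u) :
    ∑ x ∈ univ.filter
        (fun x : Fin n → Ω => Z x ≤ M - 2 * max (L * u) (σ * Real.sqrt (L * u))),
      ∏ i, μ (x i) ≤ 2 * Real.exp (-u) := by
  classical
  set t : ℝ := 2 * max (L * u) (σ * Real.sqrt (L * u)) with ht
  set v : ℝ := F.sup' hF (fun f => ∑ ω, f ω ^ 2 * μ ω) with hvdef
  have hv : ∀ f ∈ F, ∑ ω, f ω ^ 2 * μ ω ≤ v :=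
    fun f hf => Finset.le_sup' (fun f => ∑ ω, f ω ^ 2 * μ ω) hf
  have hv0 : 0 ≤ v := by
    obtain ⟨f0, hf0⟩ := hF
    refine le_trans ?_ (hv f0 hf0)
    exact Finset.sum_nonneg fun ω _ => mul_nonneg (sq_nonneg _) (hμpos ω).le
  have hσ2 : σ ^ 2 = n * v := by
    rw [hσ, Real.sq_sqrt (by positivity)]
  have hLu0 : 0 < L * u := by rw [hL]; norm_num; linarith
  -- choose lambda
  obtain ⟨lam, hlam0, hlam1, hkey⟩ :
      ∃ lam : ℝ, 0 < lam ∧ lam ≤ 1 ∧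
        (n : ℝ) * ((31/28) * lam ^ 2 * v) - lam * t ≤ -u := by
    rcases le_or_gt ((n : ℝ) * v) (L * u) with hcase | hcase
    · refine ⟨1, one_pos, le_refl 1, ?_⟩
      have ht2 : 2 * (L * u) ≤ t := by
        rw [ht]
        have := le_max_left (L * u) (σ * Real.sqrt (L * u))
        linarith
      have h1 : (n : ℝ) * ((31/28) * 1 ^ 2 * v) ≤ (31/28) * (L * u) := by
        have heq : (n : ℝ) * ((31/28) * 1 ^ 2 * v) = (31/28) * ((n : ℝ) * v) := by ring
        rw [heq]
        exact mul_le_mul_of_nonneg_left hcase (by norm_num)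
      have hLu : L * u = 1.12 * u := by rw [hL]
      nlinarith
    · have hσpos : 0 < σ := by
        rw [hσ]
        apply Real.sqrt_pos.2
        linarith
      refine ⟨Real.sqrt (L * u) / σ, by positivity, ?_, ?_⟩
      · rw [div_le_one hσpos, hσ]
        exact Real.sqrt_le_sqrt (by linarith)
      · have hsq : Real.sqrt (L * u) ^ 2 = L * u := Real.sq_sqrt hLu0.le
        have hlam2 : (Real.sqrt (L * u) / σ) ^ 2 * ((n : ℝ) * v) = L * u := by
          rw [← hσ2, div_pow, hsq]
          field_simp
        have hlamt : 2 * (L * u) ≤ (Real.sqrt (L * u) / σ) * t := by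
          have hmax : σ * Real.sqrt (L * u) ≤ max (L * u) (σ * Real.sqrt (L * u)) :=
            le_max_right _ _
          have h0 : 0 ≤ Real.sqrt (L * u) / σ := by positivity
          calc 2 * (L * u)
              = 2 * (Real.sqrt (L * u) * Real.sqrt (L * u)) * (σ / σ) := by
                rw [Real.mul_self_sqrt hLu0.le, div_self (ne_of_gt hσpos)]
                ring
            _ = (Real.sqrt (L * u) / σ) * (2 * (σ * Real.sqrt (L * u))) := by ring
            _ ≤ (Real.sqrt (L * u) / σ) * t := by
                apply mul_le_mul_of_nonneg_left _ h0
                rw [ht]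
                linarith
        have expand : (n : ℝ) * ((31/28) * (Real.sqrt (L * u) / σ) ^ 2 * v)
            = (31/28) * ((Real.sqrt (L * u) / σ) ^ 2 * ((n:ℝ) * v)) := by ring
        rw [expand, hlam2]
        have hLu : L * u = 1.12 * u := by rw [hL]
        nlinarith
  -- the constants family
  set c : (Ω → ℝ) → ℝ := fun f => (n : ℝ) * (∑ ω, f ω * μ ω) - (M - t) with hc
  have hVZ : ∀ y : Fin n → Ω,
      (F.sup' hF fun f => c f - ∑ i, f (y i)) = Z y - (M - t) := by
    intro y
    rw [hZ y]
    have h1 : ∀ f : Ω → ℝ, c f - ∑ i, f (y i)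
        = (∑ i : Fin n, ((∑ ω, f ω * μ ω) - f (y i))) - (M - t) := by
      intro f
      rw [Finset.sum_sub_distrib, Finset.sum_const, Finset.card_univ, Fintype.card_fin,
        nsmul_eq_mul, hc]
      ring
    have h2 : (F.sup' hF fun f => c f - ∑ i, f (y i))
        = F.sup' hF fun f => (∑ i : Fin n, ((∑ ω, f ω * μ ω) - f (y i))) - (M - t) :=
      Finset.sup'_congr hF rfl fun f _ => h1 f
    rw [h2]
    have h3 := Finset.comp_sup'_eq_sup'_comp (γ := ℝ) hF
      (fun z => z - (M - t))
      (fun a b => (max_sub_sub_right a b (M - t)).symm)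
      (f := fun f => ∑ i : Fin n, ((∑ ω, f ω * μ ω) - f (y i)))
    have h4 : (F.sup' hF fun f => (∑ i : Fin n, ((∑ ω, f ω * μ ω) - f (y i))) - (M - t))
        = F.sup' hF ((fun z => z - (M - t)) ∘ fun f => ∑ i : Fin n, ((∑ ω, f ω * μ ω) - f (y i))) :=
      rfl
    rw [h4, ← h3]
  have main := mgf_product μ hμpos hμsum F hF hrange v hv lam hlam0.le hlam1 n c
  set Ep : ℝ := ∑ y : Fin n → Ω, (∏ i, μ (y i)) *
      Real.exp (lam * F.sup' hF fun f => c f - ∑ i, f (y i)) with hEp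
  set Em : ℝ := ∑ y : Fin n → Ω, (∏ i, μ (y i)) *
      Real.exp (-(lam * F.sup' hF fun f => c f - ∑ i, f (y i))) with hEm
  have hwpos : ∀ y : Fin n → Ω, (0:ℝ) < ∏ i, μ (y i) :=
    fun y => Finset.prod_pos fun i _ => hμpos (y i)
  -- lower bound for Ep
  have hEp_lb : Real.exp (lam * t) * (1/2) ≤ Ep := by
    have step1 : Real.exp (lam * t) * (1/2)
        ≤ Real.exp (lam * t) * ∑ x ∈ univ.filter (fun x : Fin n → Ω => M ≤ Z x), ∏ i, μ (x i) := by
      apply mul_le_mul_of_nonneg_left _ (Real.exp_pos _).le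
      exact hM2
    refine le_trans step1 ?_
    rw [Finset.mul_sum]
    have step2 : ∀ x ∈ univ.filter (fun x : Fin n → Ω => M ≤ Z x),
        Real.exp (lam * t) * ∏ i, μ (x i)
          ≤ (∏ i, μ (x i)) * Real.exp (lam * F.sup' hF fun f => c f - ∑ i, f (x i)) := by
      intro x hx
      rw [Finset.mem_filter] at hx
      rw [hVZ x, mul_comm (Real.exp (lam * t))]
      apply mul_le_mul_of_nonneg_left _ (hwpos x).le
      apply Real.exp_le_exp.2
      apply mul_le_mul_of_nonneg_left _ hlam0.le
      linarith [hx.2]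
    refine le_trans (Finset.sum_le_sum step2) ?_
    apply Finset.sum_le_sum_of_subset_of_nonneg (Finset.filter_subset _ _)
    intro x _ _
    exact mul_nonneg (hwpos x).le (Real.exp_pos _).le
  -- target bounded by Em
  have hTarget : (∑ x ∈ univ.filter (fun x : Fin n → Ω => Z x ≤ M - t), ∏ i, μ (x i)) ≤ Em := by
    have step1 : ∀ x ∈ univ.filter (fun x : Fin n → Ω => Z x ≤ M - t),
        (∏ i, μ (x i)) ≤ (∏ i, μ (x i)) *
          Real.exp (-(lam * F.sup' hF fun f => c f - ∑ i, f (x i))) := by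
      intro x hx
      rw [Finset.mem_filter] at hx
      nth_rewrite 1 [← mul_one (∏ i, μ (x i))]
      apply mul_le_mul_of_nonneg_left _ (hwpos x).le
      rw [← Real.exp_zero]
      apply Real.exp_le_exp.2
      rw [hVZ x]
      have : Z x - (M - t) ≤ 0 := by linarith [hx.2]
      nlinarith [hlam0.le]
    refine le_trans (Finset.sum_le_sum step1) ?_
    apply Finset.sum_le_sum_of_subset_of_nonneg (Finset.filter_subset _ _)
    intro x _ _
    exact mul_nonneg (hwpos x).le (Real.exp_pos _).le
  -- combine
  have hEm_ub : Em ≤ 2 * Real.exp ((n : ℝ) * ((31/28) * lam ^ 2 * v) - lam * t) := by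
    have hEm0 : 0 ≤ Em :=
      Finset.sum_nonneg fun y _ => mul_nonneg (hwpos y).le (Real.exp_pos _).le
    have h1 : Em * (Real.exp (lam * t) * (1/2)) ≤ Real.exp ((n:ℝ) * ((31/28) * lam ^ 2 * v)) := by
      calc Em * (Real.exp (lam * t) * (1/2)) ≤ Em * Ep :=
            mul_le_mul_of_nonneg_left hEp_lb hEm0
        _ = Ep * Em := mul_comm _ _
        _ ≤ _ := main
    have hpos : (0:ℝ) < Real.exp (lam * t) * (1/2) := by positivity
    rw [← le_div_iff₀ hpos] at h1
    refine le_trans h1 (le_of_eq ?_)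
    rw [Real.exp_sub]
    field_simp
  calc (∑ x ∈ univ.filter (fun x : Fin n → Ω => Z x ≤ M - t), ∏ i, μ (x i))
      ≤ Em := hTarget
    _ ≤ 2 * Real.exp ((n : ℝ) * ((31/28) * lam ^ 2 * v) - lam * t) := hEm_ub
    _ ≤ 2 * Real.exp (-u) := by
        apply mul_le_mul_of_nonneg_left _ (by norm_num : (0:ℝ) ≤ 2)
        exact Real.exp_le_exp.2 hkey
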